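/- Let φ₁(z) = 1/(z-1) and φ₂(z) = 1/(z+1), and let φ(z) = φ₁(z) + φ₂(z) = 2z/(z²-1). Then the function z ↦ z + 2z/(z²-1) is not injective on the upper half-plane ℂ₊. -/

import Mathlib

theorem aux_rhs (t : ℝ) (key : 10 * t ^ 3 + 3 * t ^ 2 - 10 * t + 3 = 0) :
    (t : ℂ) * Complex.I + 2 * ((t : ℂ) * Complex.I) / (((t : ℂ) * Complex.I) ^ 2 - 1)
      = -(3/10) * Complex.I := by
  have hd2 : (((t : ℂ)) * Complex.I) ^ 2 - 1 ≠ 0 := by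
    rw [show (((t : ℂ) * Complex.I) ^ 2 - 1 : ℂ) = -(((t ^ 2 + 1 : ℝ) : ℂ)) by
      push_cast; rw [mul_pow, Complex.I_sq]; ring]
    simp only [neg_ne_zero, Ne, Complex.ofReal_eq_zero]
    nlinarith [sq_nonneg t]
  have keyC : 10 * (t:ℂ) ^ 3 + 3 * (t:ℂ) ^ 2 - 10 * (t:ℂ) + 3 = 0 := by
    have := congrArg (fun x : ℝ => (x : ℂ)) key
    push_cast at this
    simpa using this
  have hI3 : Complex.I ^ 3 = -Complex.I := by
    rw [pow_succ, Complex.I_sq]; ring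
  rw [add_div' _ _ _ hd2, div_eq_iff hd2]
  ring_nf
  simp only [Complex.I_sq, hI3]
  ring_nf
  linear_combination (-1/10 * Complex.I) * keyC

theorem aux_lhs :
    Complex.I / 2 + 2 * (Complex.I / 2) / ((Complex.I / 2) ^ 2 - 1) = -(3/10) * Complex.I := by
  have hd1 : ((Complex.I / 2) ^ 2 - 1 : ℂ) ≠ 0 := by
    rw [show ((Complex.I / 2) ^ 2 - 1 : ℂ) = -(5/4) by
      rw [div_pow, Complex.I_sq]; norm_num]
    norm_num
  field_simp
  ring_nf
  rw [Complex.I_sq]; norm_num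

/-- the function `z ↦ z + 2z/(z² - 1)` (which is
`F⁻¹ = z + φ₁ + φ₂` for `φ₁(z) = 1/(z-1)`, `φ₂(z) = 1/(z+1)`) is not injective
on the upper half-plane; hence the class `UI` is not closed under free
convolution. -/
theorem stmt15 :
    ¬ Set.InjOn (fun z : ℂ => z + 2 * z / (z ^ 2 - 1)) {z : ℂ | 0 < z.im} := by
  intro h
  set r : ℝ := Real.sqrt 19 with hrdef
  have hr : r ^ 2 = 19 := Real.sq_sqrt (by norm_num)
  have hr0 : 0 ≤ r := Real.sqrt_nonneg 19
  have hr4 : 4 < r := by nlinarith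
  have hr5 : r < 5 := by nlinarith
  set t : ℝ := (r - 2) / 5 with htdef
  have ht : 0 < t := by rw [htdef]; linarith
  have key : 10 * t ^ 3 + 3 * t ^ 2 - 10 * t + 3 = 0 := by
    rw [htdef]; field_simp; nlinarith
  have h1 : (Complex.I / 2) ∈ {z : ℂ | 0 < z.im} := by
    simp [Complex.div_im]
  have h2 : ((t : ℂ) * Complex.I) ∈ {z : ℂ | 0 < z.im} := by
    simpa using ht
  have hne : (Complex.I / 2) ≠ (t : ℂ) * Complex.I := by
    intro he
    have him : (Complex.I / 2).im = ((t : ℂ) * Complex.I).im := by rw [he]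
    simp [Complex.div_im] at him
    rw [htdef] at him
    nlinarith
  apply hne
  apply h h1 h2
  show Complex.I / 2 + 2 * (Complex.I / 2) / ((Complex.I / 2) ^ 2 - 1)
      = (t : ℂ) * Complex.I + 2 * ((t : ℂ) * Complex.I) / (((t : ℂ) * Complex.I) ^ 2 - 1)
  rw [aux_lhs, aux_rhs t key]
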